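/- Let ηⱼ = cos(jπ/n) for j = 0,...,n be the Chebyshev extrema, for n ≥ 1. Then ∑_{j=0}^{n} ∏_{k ≠ j} |ηₖ - ηⱼ|^(-1) = 2^(n-1). -/

import Mathlib

open Finset Polynomial in
lemma aux_zeta (N : ℕ) (hN : 1 ≤ N) (ζ : ℂ) (hζ : IsPrimitiveRoot ζ N) :
    ∏ k ∈ Finset.Ico 1 N, (1 - ζ ^ k) = N := by
  classical
  have hpos : 0 < N := hN
  have himg : nthRootsFinset N (1 : ℂ) = (Finset.range N).image (ζ ^ ·) := by
    symm
    apply Finset.eq_of_subset_of_card_le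
    · intro x hx
      simp only [Finset.mem_image, Finset.mem_range] at hx
      obtain ⟨k, -, rfl⟩ := hx
      exact (Polynomial.mem_nthRootsFinset hpos 1).2 (by
        rw [← pow_mul, mul_comm, pow_mul, hζ.pow_eq_one, one_pow])
    · rw [hζ.card_nthRootsFinset, Finset.card_image_of_injOn, Finset.card_range]
      intro a ha b hb hab
      exact hζ.pow_inj (by simpa using ha) (by simpa using hb) hab
  have h1 : (X : ℂ[X]) ^ N - 1 = ∏ k ∈ Finset.range N, (X - C (ζ ^ k)) := by
    rw [X_pow_sub_one_eq_prod hpos hζ, himg, Finset.prod_image]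
    intro a ha b hb hab
    simp only [Finset.coe_range, Finset.mem_coe, Finset.mem_range, Set.mem_Iio] at ha hb
    exact hζ.pow_inj ha hb hab
  have h2 : (X : ℂ[X]) ^ N - 1 = (X - 1) * ∏ k ∈ Finset.Ico 1 N, (X - C (ζ ^ k)) := by
    rw [h1, Finset.range_eq_Ico, Finset.prod_eq_prod_Ico_succ_bot hpos]
    simp
  have h3 : (X : ℂ[X]) ^ N - 1 = (X - 1) * ∑ i ∈ Finset.range N, X ^ i := by
    rw [mul_comm, geom_sum_mul]
  have h4 : (∏ k ∈ Finset.Ico 1 N, ((X:ℂ[X]) - C (ζ ^ k))) = ∑ i ∈ Finset.range N, X ^ i := by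
    have hx1 : (X : ℂ[X]) - 1 ≠ 0 := by
      have := Polynomial.X_sub_C_ne_zero (1 : ℂ)
      simpa using this
    exact mul_left_cancel₀ hx1 (h2.symm.trans h3)
  have := congrArg (Polynomial.eval 1) h4
  simpa [Polynomial.eval_prod] using this

lemma abs_one_sub_exp (θ : ℝ) :
    ‖1 - Complex.exp (θ * Complex.I)‖ = 2 * |Real.sin (θ / 2)| := by
  rw [Complex.exp_mul_I]
  have h1 : (1 : ℂ) - (Complex.cos θ + Complex.sin θ * Complex.I)
      = Complex.ofReal (1 - Real.cos θ) + Complex.ofReal (- Real.sin θ) * Complex.I := by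
    push_cast
    ring
  rw [h1, Complex.norm_def, Complex.normSq_add_mul_I]
  have h2 : (1 - Real.cos θ) ^ 2 + (- Real.sin θ) ^ 2 = (2 * |Real.sin (θ / 2)|) ^ 2 := by
    have hs : Real.sin (θ / 2) ^ 2 = 1 / 2 - Real.cos (2 * (θ / 2)) / 2 :=
      Real.sin_sq_eq_half_sub (θ / 2)
    rw [show 2 * (θ / 2) = θ by ring] at hs
    have hc := Real.sin_sq_add_cos_sq θ
    rw [mul_pow, sq_abs, hs]
    nlinarith [hc]
  rw [h2, Real.sqrt_sq (by positivity)]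

lemma sin_prod (N : ℕ) (hN : 1 ≤ N) :
    ∏ k ∈ Finset.Ico 1 N, (2 * Real.sin (k * Real.pi / N)) = N := by
  have hN0 : (N : ℂ) ≠ 0 := Nat.cast_ne_zero.2 (by omega)
  have hζ := Complex.isPrimitiveRoot_exp N (by omega)
  have h := aux_zeta N hN _ hζ
  have habs := congrArg (‖·‖) h
  rw [norm_prod, Complex.norm_natCast] at habs
  refine Eq.trans (Finset.prod_congr rfl fun k hk => ?_) habs
  rw [Finset.mem_Ico] at hk
  symm
  have hexp : Complex.exp (2 * Real.pi * Complex.I / N) ^ k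
      = Complex.exp ((2 * Real.pi * k / N : ℝ) * Complex.I) := by
    rw [← Complex.exp_nat_mul]
    push_cast
    ring_nf
  rw [hexp, abs_one_sub_exp]
  have harg : (2 * Real.pi * k / N : ℝ) / 2 = k * Real.pi / N := by ring
  rw [harg, abs_of_nonneg]
  apply Real.sin_nonneg_of_nonneg_of_le_pi
  · positivity
  · rw [div_le_iff₀ (by positivity : (0:ℝ) < N)]
    have : (k : ℝ) ≤ N := by exact_mod_cast hk.2.le
    nlinarith [Real.pi_pos]

open Finset

noncomputable def SS (n m : ℕ) : ℝ := Real.sin (m * Real.pi / (2 * n))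
noncomputable def QQ (n t : ℕ) : ℝ := ∏ i ∈ Finset.range t, SS n (i + 1)

lemma S_pos (n m : ℕ) (h1 : 1 ≤ m) (h2 : m < 2 * n) : 0 < SS n m := by
  have hn : 0 < n := by omega
  apply Real.sin_pos_of_pos_of_lt_pi
  · have : (0:ℝ) < m := by exact_mod_cast h1
    positivity
  · rw [div_lt_iff₀ (by positivity)]
    have : (m:ℝ) < 2 * n := by exact_mod_cast h2
    nlinarith [Real.pi_pos]

lemma S_refl (n m : ℕ) (hn : 1 ≤ n) (h : m ≤ 2 * n) : SS n (2 * n - m) = SS n m := by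
  unfold SS
  have hnr : (n:ℝ) ≠ 0 := by positivity
  have h1 : ((2 * n - m : ℕ) : ℝ) * Real.pi / (2 * n)
      = Real.pi - (m:ℝ) * Real.pi / (2 * n) := by
    rw [Nat.cast_sub h]
    push_cast
    field_simp
  rw [h1, Real.sin_pi_sub]

lemma S_n (n : ℕ) (hn : 1 ≤ n) : SS n n = 1 := by
  unfold SS
  rw [show (n : ℝ) * Real.pi / (2 * n) = Real.pi / 2 by
    field_simp]
  exact Real.sin_pi_div_two

lemma S_two (n j : ℕ) (hn : 1 ≤ n) (hj : j ≤ n) :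
    SS n (2 * j) = 2 * SS n j * SS n (n - j) := by
  unfold SS
  have hnr : (n:ℝ) ≠ 0 := by positivity
  have h1 : ((2 * j : ℕ) : ℝ) * Real.pi / (2 * n) = 2 * ((j:ℝ) * Real.pi / (2 * n)) := by
    push_cast; ring
  have h2 : ((n - j : ℕ) : ℝ) * Real.pi / (2 * n)
      = Real.pi / 2 - (j:ℝ) * Real.pi / (2 * n) := by
    rw [Nat.cast_sub hj]
    field_simp
  rw [h1, Real.sin_two_mul, h2, Real.sin_pi_div_two_sub]

lemma Q_pos (n t : ℕ) (hn : 1 ≤ n) (ht : t ≤ n) : 0 < QQ n t := by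
  apply Finset.prod_pos
  intro i hi
  rw [Finset.mem_range] at hi
  exact S_pos n (i+1) (by omega) (by omega)

lemma Q_succ (n t : ℕ) : QQ n (t + 1) = QQ n t * SS n (t + 1) :=
  Finset.prod_range_succ _ _

lemma Q_mul_main (n : ℕ) (hn : 1 ≤ n) :
    2 ^ (2 * n - 1) * (QQ n n * QQ n (n - 1)) = 2 * n := by
  have h := sin_prod (2 * n) (by omega)
  have h1 : ∏ k ∈ Finset.Ico 1 (2 * n), (2 * Real.sin (k * Real.pi / (2 * n : ℕ)))
      = ∏ k ∈ Finset.Ico 1 (2 * n), (2 * SS n k) := by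
    apply Finset.prod_congr rfl
    intro k _
    unfold SS
    norm_num
  rw [h1] at h
  have h2 : ∏ k ∈ Finset.Ico 1 (2 * n), (2 * SS n k)
      = 2 ^ (2 * n - 1) * ∏ k ∈ Finset.Ico 1 (2 * n), SS n k := by
    rw [Finset.prod_mul_distrib, Finset.prod_const, Nat.card_Ico]
  have h3 : ∏ k ∈ Finset.Ico 1 (2 * n), SS n k
      = (∏ k ∈ Finset.Ico 1 (n + 1), SS n k) * ∏ k ∈ Finset.Ico (n + 1) (2 * n), SS n k := by
    rw [Finset.prod_Ico_consecutive]
    · omega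
    · omega
  have h4 : ∏ k ∈ Finset.Ico 1 (n + 1), SS n k = QQ n n := by
    rw [Finset.prod_Ico_eq_prod_range]
    apply Finset.prod_congr (by norm_num)
    intro i _
    congr 1
    omega
  have h5 : ∏ k ∈ Finset.Ico (n + 1) (2 * n), SS n k = QQ n (n - 1) := by
    rw [Finset.prod_Ico_eq_prod_range]
    have e1 : ∀ i ∈ Finset.range (2 * n - (n + 1)), SS n (n + 1 + i) = SS n (n - 1 - i) := by
      intro i hi
      rw [Finset.mem_range] at hi
      rw [← S_refl n (n + 1 + i) hn (by omega)]
      congr 1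
      omega
    rw [Finset.prod_congr rfl e1, show 2 * n - (n + 1) = n - 1 by omega]
    unfold QQ
    rw [← Finset.prod_range_reflect (fun j => SS n (j + 1)) (n - 1)]
    apply Finset.prod_congr rfl
    intro i hi
    rw [Finset.mem_range] at hi
    congr 1
    omega
  rw [h2, h3, h4, h5] at h
  rw [h]
  push_cast
  ring

lemma cos_diff_lt (n k j : ℕ) (hn : 1 ≤ n) (hkj : k < j) (hj : j ≤ n) :
    |Real.cos (k * Real.pi / n) - Real.cos (j * Real.pi / n)|
      = 2 * SS n (k + j) * SS n (j - k) := by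
  have hnr : (n:ℝ) ≠ 0 := by positivity
  have hx : ((k:ℝ) * Real.pi / n + (j:ℝ) * Real.pi / n) / 2
      = ((k + j : ℕ) : ℝ) * Real.pi / (2 * n) := by
    push_cast; field_simp
  have hy : ((k:ℝ) * Real.pi / n - (j:ℝ) * Real.pi / n) / 2
      = -(((j - k : ℕ) : ℝ) * Real.pi / (2 * n)) := by
    rw [Nat.cast_sub hkj.le]
    push_cast; field_simp; ring
  rw [Real.cos_sub_cos, hx, hy, Real.sin_neg]
  have e : -2 * SS n (k + j) * -SS n (j - k) = 2 * SS n (k + j) * SS n (j - k) := by ring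
  rw [show Real.sin (((k + j : ℕ) : ℝ) * Real.pi / (2 * n)) = SS n (k + j) from rfl,
    show Real.sin (((j - k : ℕ) : ℝ) * Real.pi / (2 * n)) = SS n (j - k) from rfl, e]
  have p1 : 0 < SS n (k + j) := S_pos n (k + j) (by omega) (by omega)
  have p2 : 0 < SS n (j - k) := S_pos n (j - k) (by omega) (by omega)
  exact abs_of_nonneg (by nlinarith)

lemma cos_diff_gt (n k j : ℕ) (hn : 1 ≤ n) (hkj : j < k) (hk : k ≤ n) :
    |Real.cos (k * Real.pi / n) - Real.cos (j * Real.pi / n)|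
      = 2 * SS n (k + j) * SS n (k - j) := by
  have hnr : (n:ℝ) ≠ 0 := by positivity
  have hx : ((k:ℝ) * Real.pi / n + (j:ℝ) * Real.pi / n) / 2
      = ((k + j : ℕ) : ℝ) * Real.pi / (2 * n) := by
    push_cast; field_simp
  have hy : ((k:ℝ) * Real.pi / n - (j:ℝ) * Real.pi / n) / 2
      = ((k - j : ℕ) : ℝ) * Real.pi / (2 * n) := by
    rw [Nat.cast_sub hkj.le]
    push_cast; field_simp
  rw [Real.cos_sub_cos, hx, hy]
  rw [show Real.sin (((k + j : ℕ) : ℝ) * Real.pi / (2 * n)) = SS n (k + j) from rfl,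
    show Real.sin (((k - j : ℕ) : ℝ) * Real.pi / (2 * n)) = SS n (k - j) from rfl]
  have p1 : 0 < SS n (k + j) := S_pos n (k + j) (by omega) (by omega)
  have p2 : 0 < SS n (k - j) := S_pos n (k - j) (by omega) (by omega)
  rw [abs_of_nonpos (by nlinarith)]
  ring

lemma QIco (n t : ℕ) : ∏ k ∈ Finset.Ico 1 (t + 1), SS n k = QQ n t := by
  rw [Finset.prod_Ico_eq_prod_range]
  apply Finset.prod_congr (by norm_num)
  intro i _
  congr 1
  omega

lemma Qrefl (n t : ℕ) : ∏ k ∈ Finset.range t, SS n (t - k) = QQ n t := by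
  unfold QQ
  rw [← Finset.prod_range_reflect (fun i => SS n (i + 1)) t]
  apply Finset.prod_congr rfl
  intro i hi
  rw [Finset.mem_range] at hi
  congr 1
  omega

lemma QQ_nn (n : ℕ) (hn : 1 ≤ n) : QQ n n = QQ n (n - 1) := by
  have h := Q_succ n (n - 1)
  rw [show n - 1 + 1 = n by omega] at h
  rw [h, S_n n hn, mul_one]

lemma hQval (n : ℕ) (hn : 1 ≤ n) :
    QQ n n * QQ n (n - 1) = 2 * n / 2 ^ (2 * n - 1) := by
  rw [eq_div_iff (by positivity), mul_comm]
  exact Q_mul_main n hn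

lemma key_prod (n j : ℕ) (hn : 1 ≤ n) (hj : j ≤ n) :
    ∏ k ∈ (Finset.range (n+1)).erase j,
      |Real.cos (k * Real.pi / n) - Real.cos (j * Real.pi / n)|
      = (if j = 0 ∨ j = n then 2 else 1) * (n / 2 ^ (n - 1)) := by
  have hpow : (2:ℝ) ^ (2 * n - 1) = 2 ^ n * 2 ^ (n - 1) := by
    rw [← pow_add]
    congr 1
    omega
  have hQ1 : (0:ℝ) < QQ n (n-1) := Q_pos n (n-1) hn (by omega)
  have hend : 2 ^ n * (QQ n n * QQ n n) = 2 * ((n:ℝ) / 2 ^ (n - 1)) := by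
    rw [show QQ n n * QQ n n = QQ n n * QQ n (n-1) by rw [QQ_nn n hn]]
    rw [hQval n hn, hpow]
    field_simp
  by_cases hj0 : j = 0
  · subst hj0
    rw [if_pos (Or.inl rfl)]
    have hset : (Finset.range (n+1)).erase 0 = Finset.Ico 1 (n+1) := by
      ext x
      simp only [Finset.mem_erase, Finset.mem_range, Finset.mem_Ico]
      omega
    rw [hset]
    have hfac : ∀ k ∈ Finset.Ico 1 (n+1),
        |Real.cos (k * Real.pi / n) - Real.cos ((0:ℕ) * Real.pi / n)|
          = 2 * (SS n k * SS n k) := by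
      intro k hk
      rw [Finset.mem_Ico] at hk
      have := cos_diff_gt n k 0 hn (by omega) (by omega)
      rw [this]
      rw [show k + 0 = k from rfl, show k - 0 = k from rfl]
      ring
    rw [Finset.prod_congr rfl hfac, Finset.prod_mul_distrib, Finset.prod_const,
      Nat.card_Ico, Finset.prod_mul_distrib, QIco]
    rw [show n + 1 - 1 = n by omega]
    exact hend
  by_cases hjn : j = n
  · rw [if_pos (Or.inr hjn), hjn]
    have hset : (Finset.range (n+1)).erase n = Finset.range n := by
      ext x
      simp only [Finset.mem_erase, Finset.mem_range]
      omega
    rw [hset]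
    have hfac : ∀ k ∈ Finset.range n,
        |Real.cos (k * Real.pi / n) - Real.cos (n * Real.pi / n)|
          = 2 * (SS n (n - k) * SS n (n - k)) := by
      intro k hk
      rw [Finset.mem_range] at hk
      rw [cos_diff_lt n k n hn hk le_rfl]
      rw [show SS n (k + n) = SS n (n - k) by
        rw [← S_refl n (k + n) hn (by omega)]
        congr 1
        omega]
      ring
    rw [Finset.prod_congr rfl hfac, Finset.prod_mul_distrib, Finset.prod_const,
      Finset.card_range, Finset.prod_mul_distrib, Qrefl]
    exact hend
  -- interior case
  rw [if_neg (by tauto)]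
  have hj1 : 1 ≤ j := by omega
  have hjn1 : j ≤ n - 1 := by omega
  have hset : (Finset.range (n+1)).erase j = Finset.Ico 0 j ∪ Finset.Ico (j+1) (n+1) := by
    ext x
    simp only [Finset.mem_erase, Finset.mem_range, Finset.mem_union, Finset.mem_Ico]
    omega
  have hdisj : Disjoint (Finset.Ico 0 j) (Finset.Ico (j+1) (n+1)) := by
    rw [Finset.disjoint_left]
    intro x hx hx'
    rw [Finset.mem_Ico] at hx hx'
    omega
  rw [hset, Finset.prod_union hdisj]
  have e1 : ∏ k ∈ Finset.Ico 0 j, |Real.cos (k * Real.pi / n) - Real.cos (j * Real.pi / n)|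
      = 2 ^ j * (∏ k ∈ Finset.range j, SS n (k + j)) * QQ n j := by
    rw [← Finset.range_eq_Ico]
    rw [Finset.prod_congr rfl (fun k hk => cos_diff_lt n k j hn (Finset.mem_range.1 hk) hj)]
    rw [Finset.prod_mul_distrib, Finset.prod_mul_distrib, Finset.prod_const,
      Finset.card_range, Qrefl]
  have e2 : ∏ k ∈ Finset.Ico (j+1) (n+1), |Real.cos (k * Real.pi / n) - Real.cos (j * Real.pi / n)|
      = 2 ^ (n - j) * (∏ i ∈ Finset.range (n - j), SS n (2 * j + 1 + i)) * QQ n (n - j) := by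
    have hcg : ∀ k ∈ Finset.Ico (j+1) (n+1),
        |Real.cos (k * Real.pi / n) - Real.cos (j * Real.pi / n)|
          = 2 * SS n (k + j) * SS n (k - j) := by
      intro k hk
      rw [Finset.mem_Ico] at hk
      exact cos_diff_gt n k j hn (by omega) (by omega)
    rw [Finset.prod_congr rfl hcg, Finset.prod_Ico_eq_prod_range,
      show n + 1 - (j + 1) = n - j by omega]
    have hpc : ∀ i ∈ Finset.range (n - j),
        2 * SS n (j + 1 + i + j) * SS n (j + 1 + i - j) = 2 * SS n (2 * j + 1 + i) * SS n (i + 1) := by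
      intro i hi
      congr 2
      · congr 1; omega
      · congr 1; omega
    rw [Finset.prod_congr rfl hpc, Finset.prod_mul_distrib, Finset.prod_mul_distrib,
      Finset.prod_const, Finset.card_range]
    rfl
  rw [e1, e2]
  -- abbreviations
  have psj : 0 < SS n j := S_pos n j (by omega) (by omega)
  have psnj : 0 < SS n (n - j) := S_pos n (n - j) (by omega) (by omega)
  have ps2j : 0 < SS n (2 * j) := S_pos n (2 * j) (by omega) (by omega)
  have pqj1 : 0 < QQ n (j - 1) := Q_pos n (j - 1) hn (by omega)
  have pqnj1 : 0 < QQ n (n - j - 1) := Q_pos n (n - j - 1) hn (by omega)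
  have hc8 : QQ n j = QQ n (j - 1) * SS n j := by
    have h := Q_succ n (j - 1)
    rw [show j - 1 + 1 = j by omega] at h
    exact h
  have hc9 : QQ n (n - j) = QQ n (n - j - 1) * SS n (n - j) := by
    have h := Q_succ n (n - j - 1)
    rw [show n - j - 1 + 1 = n - j by omega] at h
    exact h
  have hc10 : SS n (2 * j) = 2 * SS n j * SS n (n - j) := S_two n j hn hj
  -- hA and hB
  have hA : QQ n (j - 1) * ∏ k ∈ Finset.Ico j (n + 1), SS n k = QQ n n := by
    have h1 : QQ n (j - 1) = ∏ k ∈ Finset.Ico 1 j, SS n k := by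
      rw [← QIco n (j - 1), show j - 1 + 1 = j by omega]
    rw [h1, Finset.prod_Ico_consecutive _ (by omega) (by omega), QIco]
  have hB : QQ n (n - j - 1) * ∏ k ∈ Finset.Ico (n - j) n, SS n k = QQ n (n - 1) := by
    have h1 : QQ n (n - j - 1) = ∏ k ∈ Finset.Ico 1 (n - j), SS n k := by
      rw [← QIco n (n - j - 1), show n - j - 1 + 1 = n - j by omega]
    have h2 : QQ n (n - 1) = ∏ k ∈ Finset.Ico 1 n, SS n k := by
      rw [← QIco n (n - 1), show n - 1 + 1 = n by omega]
    rw [h1, h2, Finset.prod_Ico_consecutive _ (by omega) (by omega)]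
  -- hX
  have x1 : ∏ k ∈ Finset.Ico j (2 * j), SS n k = ∏ k ∈ Finset.range j, SS n (k + j) := by
    rw [Finset.prod_Ico_eq_prod_range, show 2 * j - j = j by omega]
    apply Finset.prod_congr rfl
    intro i _
    congr 1
    omega
  have x2 : ∏ k ∈ Finset.Ico (2 * j + 1) (n + j + 1), SS n k
      = ∏ i ∈ Finset.range (n - j), SS n (2 * j + 1 + i) := by
    rw [Finset.prod_Ico_eq_prod_range, show n + j + 1 - (2 * j + 1) = n - j by omega]
  have x3 : ∏ k ∈ Finset.Ico j (2 * j + 1), SS n k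
      = (∏ k ∈ Finset.Ico j (2 * j), SS n k) * SS n (2 * j) :=
    Finset.prod_Ico_succ_top (by omega) _
  have x4 : (∏ k ∈ Finset.Ico j (2 * j + 1), SS n k)
      * ∏ k ∈ Finset.Ico (2 * j + 1) (n + j + 1), SS n k
      = ∏ k ∈ Finset.Ico j (n + j + 1), SS n k :=
    Finset.prod_Ico_consecutive _ (by omega) (by omega)
  have x5 : (∏ k ∈ Finset.Ico j (n + 1), SS n k)
      * ∏ k ∈ Finset.Ico (n + 1) (n + j + 1), SS n k
      = ∏ k ∈ Finset.Ico j (n + j + 1), SS n k :=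
    Finset.prod_Ico_consecutive _ (by omega) (by omega)
  have x6 : ∏ k ∈ Finset.Ico (n + 1) (n + j + 1), SS n k
      = ∏ k ∈ Finset.Ico (n - j) n, SS n k := by
    rw [Finset.prod_Ico_eq_prod_range, show n + j + 1 - (n + 1) = j by omega]
    rw [Finset.prod_Ico_eq_prod_range, show n - (n - j) = j by omega]
    have l1 : ∀ i ∈ Finset.range j, SS n (n + 1 + i) = SS n (n - 1 - i) := by
      intro i hi
      rw [Finset.mem_range] at hi
      rw [← S_refl n (n + 1 + i) hn (by omega)]
      congr 1
      omega
    rw [Finset.prod_congr rfl l1]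
    rw [← Finset.prod_range_reflect (fun i => SS n (n - j + i)) j]
    apply Finset.prod_congr rfl
    intro i hi
    rw [Finset.mem_range] at hi
    congr 1
    omega
  have hX : SS n (2 * j) * ((∏ k ∈ Finset.range j, SS n (k + j))
        * ∏ i ∈ Finset.range (n - j), SS n (2 * j + 1 + i))
      = (∏ k ∈ Finset.Ico j (n + 1), SS n k) * ∏ k ∈ Finset.Ico (n - j) n, SS n k := by
    rw [← x1, ← x2, ← x6, x5, ← x4, x3]
    ring
  -- combine
  have hab : (∏ k ∈ Finset.range j, SS n (k + j))
        * ∏ i ∈ Finset.range (n - j), SS n (2 * j + 1 + i)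
      = (QQ n n * QQ n (n - 1)) / (QQ n (j - 1) * QQ n (n - j - 1) * SS n (2 * j)) := by
    rw [eq_div_iff (by positivity)]
    calc (∏ k ∈ Finset.range j, SS n (k + j))
          * (∏ i ∈ Finset.range (n - j), SS n (2 * j + 1 + i))
          * (QQ n (j - 1) * QQ n (n - j - 1) * SS n (2 * j))
        = QQ n (j - 1) * QQ n (n - j - 1)
          * (SS n (2 * j) * ((∏ k ∈ Finset.range j, SS n (k + j))
            * ∏ i ∈ Finset.range (n - j), SS n (2 * j + 1 + i))) := by ring
      _ = QQ n (j - 1) * QQ n (n - j - 1)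
          * ((∏ k ∈ Finset.Ico j (n + 1), SS n k) * ∏ k ∈ Finset.Ico (n - j) n, SS n k) := by
          rw [hX]
      _ = (QQ n (j - 1) * ∏ k ∈ Finset.Ico j (n + 1), SS n k)
          * (QQ n (n - j - 1) * ∏ k ∈ Finset.Ico (n - j) n, SS n k) := by ring
      _ = QQ n n * QQ n (n - 1) := by rw [hA, hB]
  calc 2 ^ j * (∏ k ∈ Finset.range j, SS n (k + j)) * QQ n j
        * (2 ^ (n - j) * (∏ i ∈ Finset.range (n - j), SS n (2 * j + 1 + i)) * QQ n (n - j))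
      = 2 ^ j * 2 ^ (n - j)
        * ((∏ k ∈ Finset.range j, SS n (k + j))
          * ∏ i ∈ Finset.range (n - j), SS n (2 * j + 1 + i))
        * (QQ n (j - 1) * QQ n (n - j - 1)) * (SS n j * SS n (n - j)) := by
        rw [hc8, hc9]; ring
    _ = (1:ℝ) * (n / 2 ^ (n - 1)) := by
        rw [hab, hQval n hn, hc10, ← pow_add, show j + (n - j) = n by omega]
        field_simp
        rw [hpow]

theorem chebyshev_extrema_sum (n : ℕ) (hn : 1 ≤ n) :
    ∑ j : Fin (n + 1), ∏ k ∈ Finset.univ.erase j,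
      |Real.cos ((k : ℕ) * Real.pi / n) - Real.cos ((j : ℕ) * Real.pi / n)|⁻¹
      = 2 ^ (n - 1) := by
  have hnr : (n:ℝ) ≠ 0 := Nat.cast_ne_zero.2 (by omega)
  have hmap : ∀ j : Fin (n+1),
      (Finset.univ.erase j).map Fin.valEmbedding = (Finset.range (n+1)).erase (j:ℕ) := by
    intro j
    ext m
    simp only [Finset.mem_map, Finset.mem_erase, Finset.mem_univ, and_true,
      Finset.mem_range, Fin.valEmbedding_apply]
    constructor
    · rintro ⟨a, ha, rfl⟩
      exact ⟨fun h => ha (Fin.ext h), a.isLt⟩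
    · rintro ⟨hm1, hm2⟩
      exact ⟨⟨m, hm2⟩, fun h => hm1 (congrArg Fin.val h), rfl⟩
  have step1 : ∀ j : Fin (n+1),
      ∏ k ∈ Finset.univ.erase j,
        |Real.cos ((k : ℕ) * Real.pi / n) - Real.cos ((j : ℕ) * Real.pi / n)|⁻¹
      = ((if (j:ℕ) = 0 ∨ (j:ℕ) = n then 2 else 1) * ((n:ℝ) / 2 ^ (n - 1)))⁻¹ := by
    intro j
    rw [← key_prod n (j:ℕ) hn (by omega : (j:ℕ) ≤ n)]
    rw [← Finset.prod_inv_distrib]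
    rw [← hmap j, Finset.prod_map]
    rfl
  rw [Finset.sum_congr rfl (fun j _ => step1 j)]
  rw [Fin.sum_univ_eq_sum_range
    (fun m => ((if m = 0 ∨ m = n then 2 else 1) * ((n:ℝ) / 2 ^ (n - 1)))⁻¹) (n+1)]
  have hsum : ∀ m ∈ Finset.range (n+1),
      ((if m = 0 ∨ m = n then 2 else 1) * ((n:ℝ) / 2 ^ (n - 1)))⁻¹
      = 2^(n-1)/(n:ℝ) - (if m = 0 then 2^(n-1)/(2*(n:ℝ)) else 0)
        - (if m = n then 2^(n-1)/(2*(n:ℝ)) else 0) := by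
    intro m _
    by_cases h0 : m = 0
    · subst h0
      rw [if_pos (Or.inl rfl), if_pos rfl, if_neg (by omega)]
      field_simp
      ring
    by_cases hn' : m = n
    · subst hn'
      rw [if_pos (Or.inr rfl), if_neg h0, if_pos rfl]
      field_simp
      ring
    · rw [if_neg (by tauto), if_neg h0, if_neg hn']
      field_simp
      ring
  rw [Finset.sum_congr rfl hsum]
  rw [Finset.sum_sub_distrib, Finset.sum_sub_distrib, Finset.sum_const, Finset.card_range]
  rw [Finset.sum_ite_eq' (Finset.range (n+1)) 0 (fun _ => 2^(n-1)/(2*(n:ℝ)))]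
  rw [Finset.sum_ite_eq' (Finset.range (n+1)) n (fun _ => 2^(n-1)/(2*(n:ℝ)))]
  rw [if_pos (Finset.mem_range.2 (by omega)), if_pos (Finset.mem_range.2 (by omega))]
  rw [nsmul_eq_mul]
  push_cast
  field_simp
  ring
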